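/- The hexagonal (honeycomb) lattice graph is an isometric subgraph of ℤ^3: for all vertices x, y, the graph distance d(x,y) equals the ℓ1 distance |x₁−y₁| + |x₂−y₂| + |x₃−y₃|. -/
import Mathlib

/-- The hexagonal (honeycomb) lattice graph: vertex set
`{x ∈ ℤ^3 : x₁ + x₂ + x₃ ∈ {0,1}}`, with `x` adjacent to `y` iff their ℓ1 distance
equals 1. -/
def hexagonalLattice :
    SimpleGraph {x : Fin 3 → ℤ // x 0 + x 1 + x 2 = 0 ∨ x 0 + x 1 + x 2 = 1} :=
  SimpleGraph.fromRel (fun x y => ∑ i, |x.val i - y.val i| = 1)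

abbrev HexV := {x : Fin 3 → ℤ // x 0 + x 1 + x 2 = 0 ∨ x 0 + x 1 + x 2 = 1}

lemma hex_adj_iff (x y : HexV) :
    hexagonalLattice.Adj x y ↔ x ≠ y ∧ ∑ i, |x.val i - y.val i| = 1 := by
  rw [hexagonalLattice, SimpleGraph.fromRel_adj]
  have hsymm : (∑ i, |y.val i - x.val i|) = ∑ i, |x.val i - y.val i| :=
    Finset.sum_congr rfl fun i _ => abs_sub_comm _ _
  constructor
  · rintro ⟨hne, h | h⟩
    · exact ⟨hne, h⟩
    · exact ⟨hne, by rw [← hsymm]; exact h⟩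
  · rintro ⟨hne, h⟩; exact ⟨hne, Or.inl h⟩

lemma hex_le_length {x y : HexV} (w : hexagonalLattice.Walk x y) :
    ∑ i, |x.val i - y.val i| ≤ (w.length : ℤ) := by
  induction w with
  | nil => simp
  | @cons a b c h w ih =>
    have h1 := ((hex_adj_iff a b).1 h).2
    have tri : ∑ i, |a.val i - c.val i| ≤
        (∑ i, |a.val i - b.val i|) + ∑ i, |b.val i - c.val i| := by
      rw [← Finset.sum_add_distrib]
      exact Finset.sum_le_sum fun i _ => abs_sub_le _ _ _
    simp only [SimpleGraph.Walk.length_cons]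
    push_cast
    linarith

lemma hex_step (x y : HexV) (hne : x ≠ y) :
    ∃ z : HexV, hexagonalLattice.Adj x z ∧
      (∑ i, |z.val i - y.val i|) + 1 = ∑ i, |x.val i - y.val i| := by
  have hvne : x.val ≠ y.val := fun h => hne (Subtype.ext h)
  rcases x.prop with hx | hx
  · -- sum x = 0: find i with x i < y i, increase it
    have hex : (x.val 0 < y.val 0) ∨ (x.val 1 < y.val 1) ∨ (x.val 2 < y.val 2) := by
      by_contra h; push_neg at h
      obtain ⟨h0, h1, h2⟩ := h
      rcases y.prop with hy | hy
      · apply hvne; funext i; fin_cases i <;> simp <;> omega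
      · omega
    rcases hex with hi | hi | hi
    · refine ⟨⟨![x.val 0 + 1, x.val 1, x.val 2], Or.inr (by simp; omega)⟩, ?_, ?_⟩
      · rw [hex_adj_iff]
        refine ⟨?_, ?_⟩
        · intro h
          have := congrArg (fun v => v.val 0) h
          simp at this
        · simp [Fin.sum_univ_three]
      · simp only [Fin.sum_univ_three, Matrix.cons_val_zero, Matrix.cons_val_one,
          Matrix.head_cons, Matrix.cons_val_two, Matrix.tail_cons, Int.abs_eq_natAbs]
        omega
    · refine ⟨⟨![x.val 0, x.val 1 + 1, x.val 2], Or.inr (by simp; omega)⟩, ?_, ?_⟩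
      · rw [hex_adj_iff]
        refine ⟨?_, ?_⟩
        · intro h
          have := congrArg (fun v => v.val 1) h
          simp at this
        · simp [Fin.sum_univ_three]
      · simp only [Fin.sum_univ_three, Matrix.cons_val_zero, Matrix.cons_val_one,
          Matrix.head_cons, Matrix.cons_val_two, Matrix.tail_cons, Int.abs_eq_natAbs]
        omega
    · refine ⟨⟨![x.val 0, x.val 1, x.val 2 + 1], Or.inr (by simp; omega)⟩, ?_, ?_⟩
      · rw [hex_adj_iff]
        refine ⟨?_, ?_⟩
        · intro h
          have := congrArg (fun v => v.val 2) h
          simp at this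
        · simp [Fin.sum_univ_three]
      · simp only [Fin.sum_univ_three, Matrix.cons_val_zero, Matrix.cons_val_one,
          Matrix.head_cons, Matrix.cons_val_two, Matrix.tail_cons, Int.abs_eq_natAbs]
        omega
  · -- sum x = 1: find i with x i > y i, decrease it
    have hex : (y.val 0 < x.val 0) ∨ (y.val 1 < x.val 1) ∨ (y.val 2 < x.val 2) := by
      by_contra h; push_neg at h
      obtain ⟨h0, h1, h2⟩ := h
      rcases y.prop with hy | hy
      · omega
      · apply hvne; funext i; fin_cases i <;> simp <;> omega
    rcases hex with hi | hi | hi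
    · refine ⟨⟨![x.val 0 - 1, x.val 1, x.val 2], Or.inl (by simp; omega)⟩, ?_, ?_⟩
      · rw [hex_adj_iff]
        refine ⟨?_, ?_⟩
        · intro h
          have := congrArg (fun v => v.val 0) h
          simp at this
          omega
        · simp [Fin.sum_univ_three]
      · simp only [Fin.sum_univ_three, Matrix.cons_val_zero, Matrix.cons_val_one,
          Matrix.head_cons, Matrix.cons_val_two, Matrix.tail_cons, Int.abs_eq_natAbs]
        omega
    · refine ⟨⟨![x.val 0, x.val 1 - 1, x.val 2], Or.inl (by simp; omega)⟩, ?_, ?_⟩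
      · rw [hex_adj_iff]
        refine ⟨?_, ?_⟩
        · intro h
          have := congrArg (fun v => v.val 1) h
          simp at this
          omega
        · simp [Fin.sum_univ_three]
      · simp only [Fin.sum_univ_three, Matrix.cons_val_zero, Matrix.cons_val_one,
          Matrix.head_cons, Matrix.cons_val_two, Matrix.tail_cons, Int.abs_eq_natAbs]
        omega
    · refine ⟨⟨![x.val 0, x.val 1, x.val 2 - 1], Or.inl (by simp; omega)⟩, ?_, ?_⟩
      · rw [hex_adj_iff]
        refine ⟨?_, ?_⟩
        · intro h
          have := congrArg (fun v => v.val 2) h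
          simp at this
          omega
        · simp [Fin.sum_univ_three]
      · simp only [Fin.sum_univ_three, Matrix.cons_val_zero, Matrix.cons_val_one,
          Matrix.head_cons, Matrix.cons_val_two, Matrix.tail_cons, Int.abs_eq_natAbs]
        omega

lemma hex_exists_walk : ∀ (n : ℕ) (x y : HexV), ∑ i, |x.val i - y.val i| = n →
    ∃ w : hexagonalLattice.Walk x y, w.length = n := by
  intro n
  induction n with
  | zero =>
    intro x y h
    have hxy : x = y := by
      apply Subtype.ext; funext i
      rw [Fin.sum_univ_three] at h
      simp only [Int.abs_eq_natAbs] at h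
      fin_cases i <;> simp <;> omega
    subst hxy
    exact ⟨SimpleGraph.Walk.nil, rfl⟩
  | succ n ih =>
    intro x y h
    have hne : x ≠ y := by
      intro he; subst he; simp at h; omega
    obtain ⟨z, hadj, hz⟩ := hex_step x y hne
    have hzn : ∑ i, |z.val i - y.val i| = (n : ℤ) := by push_cast at h ⊢; linarith
    obtain ⟨w, hw⟩ := ih z y hzn
    exact ⟨SimpleGraph.Walk.cons hadj w, by simp [hw]⟩

/-- The hexagonal lattice graph is an isometric subgraph of `ℤ^3`:
the graph distance equals the ℓ1 distance. -/
theorem hexagonalLattice_isometric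
    (x y : {x : Fin 3 → ℤ // x 0 + x 1 + x 2 = 0 ∨ x 0 + x 1 + x 2 = 1}) :
    (hexagonalLattice.dist x y : ℤ) = ∑ i, |x.val i - y.val i| := by
  set L : ℤ := ∑ i, |x.val i - y.val i| with hL
  have hLnn : 0 ≤ L := Finset.sum_nonneg fun i _ => abs_nonneg _
  obtain ⟨w, hw⟩ := hex_exists_walk L.toNat x y (by rw [hL, Int.toNat_of_nonneg hLnn])
  have h1 : hexagonalLattice.dist x y ≤ w.length := SimpleGraph.dist_le w
  have hr : hexagonalLattice.Reachable x y := ⟨w⟩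
  obtain ⟨p, hp⟩ := hr.exists_walk_length_eq_dist
  have h2 := hex_le_length p
  rw [hp] at h2
  omega
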